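/- Let p be an odd prime, k a field of characteristic zero, and ζ_p a primitive p-th root of unity in an algebraic closure of k. Then [k(ζ_p) : k] ≤ 2 if and only if k contains the unique subfield F of ℚ(ζ_p) with [ℚ(ζ_p) : F] = 2. -/

import Mathlib

set_option maxHeartbeats 1000000
set_option synthInstance.maxHeartbeats 200000

open IntermediateField Polynomial

section Aux

variable {p : ℕ} {ζ : ℂ}

lemma aux_isIntegral (hp : p ≠ 0) (hζp : ζ ^ p = 1) (L : IntermediateField ℚ ℂ) :
    IsIntegral ↥L ζ :=
  ⟨X ^ p - C 1, monic_X_pow_sub_C 1 hp, by simp [hζp]⟩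

/-- Rank formula: `[L(ζ):L] = deg minpoly`. -/
lemma aux_rank_formula (hp : p ≠ 0) (hζp : ζ ^ p = 1) (L : IntermediateField ℚ ℂ) :
    relfinrank L (L ⊔ adjoin ℚ {ζ}) = (minpoly ↥L ζ).natDegree := by
  have hle : L ≤ L ⊔ adjoin ℚ {ζ} := le_sup_left
  rw [relfinrank_eq_finrank_of_le hle]
  have he : extendScalars hle = adjoin ↥L {ζ} := by
    apply restrictScalars_injective ℚ
    exact (restrictScalars_adjoin_eq_sup ℚ L ({ζ} : Set ℂ)).symm
  rw [he]
  exact adjoin.finrank (aux_isIntegral hp hζp L)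

/-- Quadratic bound: if `ζ + ζ⁻¹ ∈ L` then the minimal polynomial of `ζ` over `L`
has degree at most 2. -/
lemma aux_deg_le_two (hp : p ≠ 0) (hζp : ζ ^ p = 1) {L : IntermediateField ℚ ℂ}
    (hα : ζ + ζ⁻¹ ∈ L) : (minpoly ↥L ζ).natDegree ≤ 2 := by
  have hζ0 : ζ ≠ 0 := fun h => by simp [h, zero_pow hp] at hζp
  set a : ↥L := ⟨ζ + ζ⁻¹, hα⟩ with ha
  set q : Polynomial ↥L := X ^ 2 - C a * X + C 1 with hq
  have hqd : q.natDegree = 2 := by rw [hq]; compute_degree!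
  have hq0 : q ≠ 0 := fun h => by simp [h] at hqd
  have heval : (Polynomial.aeval ζ) q = 0 := by
    have hca : (algebraMap ↥L ℂ) a = ζ + ζ⁻¹ := rfl
    simp only [hq, map_add, map_sub, map_mul, map_pow, map_one, aeval_X, aeval_C, hca]
    field_simp
    ring
  have hle := minpoly.degree_le_of_ne_zero ↥L ζ hq0 heval
  calc (minpoly ↥L ζ).natDegree ≤ q.natDegree := natDegree_le_natDegree hle
    _ = 2 := hqd

/-- Main extraction: if `deg minpoly ≤ 2` then `ζ + ζ⁻¹ ∈ L`. -/
lemma aux_mem_of_deg_le_two (hp : p.Prime) (hζ : IsPrimitiveRoot ζ p)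
    {L : IntermediateField ℚ ℂ} (hd : (minpoly ↥L ζ).natDegree ≤ 2) :
    ζ + ζ⁻¹ ∈ L := by
  have hζp : ζ ^ p = 1 := hζ.pow_eq_one
  have hζ0 : ζ ≠ 0 := fun h => by simp [h, zero_pow hp.ne_zero] at hζp
  have hint : IsIntegral ↥L ζ := aux_isIntegral hp.ne_zero hζp L
  have hmem : ∀ M : IntermediateField ℚ ℂ, ζ ∈ M → ζ + ζ⁻¹ ∈ M := fun M h =>
    M.add_mem h (M.inv_mem h)
  have hd1 : 1 ≤ (minpoly ↥L ζ).natDegree := minpoly.natDegree_pos hint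
  interval_cases hdeg : (minpoly ↥L ζ).natDegree
  · -- degree 1 : ζ ∈ L
    obtain ⟨y, hy⟩ := minpoly.natDegree_eq_one_iff.mp hdeg
    exact hmem L (hy ▸ y.2)
  · -- degree 2
    set m := minpoly ↥L ζ with hm
    have hmon : m.Monic := minpoly.monic hint
    set mC : Polynomial ℂ := m.map (algebraMap ↥L ℂ) with hmC
    have hmCmon : mC.Monic := hmon.map _
    have hmCdeg : mC.natDegree = 2 := by rw [hmC, natDegree_map]; exact hdeg
    have hroot : mC.IsRoot ζ := by
      rw [IsRoot, hmC, eval_map, ← aeval_def]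
      exact minpoly.aeval ↥L ζ
    set g : Polynomial ℂ := mC / (X - C ζ) with hg
    have hfac : (X - C ζ) * g = mC := mul_div_eq_iff_isRoot.mpr hroot
    have hgmon : g.Monic := (monic_X_sub_C ζ).of_mul_monic_left (hfac ▸ hmCmon)
    have hgdeg : g.natDegree = 1 := by
      have h2 := (monic_X_sub_C ζ).natDegree_mul hgmon
      rw [hfac, hmCdeg, natDegree_X_sub_C] at h2
      omega
    have hgX : g = X + C (g.coeff 0) := hgmon.eq_X_add_C hgdeg
    set ζ' : ℂ := -(g.coeff 0) with hζ'
    have hfac2 : mC = (X - C ζ) * (X - C ζ') := by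
      rw [← hfac, hgX, hζ', map_neg, sub_neg_eq_add]
    have hcoeff : ∀ i, mC.coeff i ∈ L := fun i => by
      rw [hmC, coeff_map]; exact (m.coeff i).2
    have hc0 : mC.coeff 0 = ζ * ζ' := by
      rw [hfac2, coeff_zero_eq_eval_zero]; simp
    have hc1 : mC.coeff 1 = -(ζ + ζ') := by
      have hexp : (X - C ζ) * (X - C ζ') = X ^ 2 - (C ζ + C ζ') * X + C ζ * C ζ' := by
        ring
      rw [hfac2, hexp]
      simp
    have hmul_mem : ζ * ζ' ∈ L := hc0 ▸ hcoeff 0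
    have hsum_mem : ζ + ζ' ∈ L := by
      have h3 := hcoeff 1
      rw [hc1] at h3
      simpa using L.neg_mem h3
    have hdvd : mC ∣ X ^ p - C 1 := by
      have h1 : m ∣ X ^ p - C 1 := minpoly.dvd ↥L ζ (by simp [hζp])
      have h2 := Polynomial.map_dvd (algebraMap ↥L ℂ) h1
      simpa using h2
    have hζ'root : mC.IsRoot ζ' := by
      rw [hfac2]; simp [IsRoot]
    have hζ'p : ζ' ^ p = 1 := by
      obtain ⟨r, hr⟩ := hdvd
      have h4 := congrArg (Polynomial.eval ζ') hr
      rw [eval_mul, hζ'root.eq_zero, zero_mul] at h4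
      simpa [sub_eq_zero] using h4
    by_cases hone : ζ * ζ' = 1
    · have hzinv : ζ' = ζ⁻¹ := by field_simp; linear_combination hone
      rw [← hzinv]; exact hsum_mem
    · haveI : NeZero p := ⟨hp.ne_zero⟩
      obtain ⟨i, _, hi⟩ := hζ.eq_pow_of_pow_eq_one hζ'p
      have hz : ζ * ζ' = ζ ^ (i + 1) := by rw [pow_succ, hi]; ring
      have hndvd : ¬ p ∣ (i + 1) := fun h =>
        hone (by rw [hz]; exact (hζ.pow_eq_one_iff_dvd _).mpr h)
      have hcop : (i + 1).Coprime p :=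
        Nat.Coprime.symm ((Nat.Prime.coprime_iff_not_dvd hp).mpr hndvd)
      have hprim : IsPrimitiveRoot (ζ * ζ') p := by
        rw [hz]; exact hζ.pow_of_coprime _ hcop
      obtain ⟨t, _, ht⟩ := hprim.eq_pow_of_pow_eq_one hζp
      exact hmem L (ht ▸ L.pow_mem hmul_mem t)

end Aux

section Aux2

variable {p : ℕ} {ζ : ℂ}

lemma aux_zeta_not_mem (hp : p.Prime) (hodd : Odd p) (hζ : IsPrimitiveRoot ζ p) :
    ζ ∉ adjoin ℚ {ζ + ζ⁻¹} := by
  have hζp : ζ ^ p = 1 := hζ.pow_eq_one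
  have hnorm : ‖ζ‖ = 1 := Complex.norm_eq_one_of_pow_eq_one hζp hp.ne_zero
  have hconj : (starRingEnd ℂ) ζ = ζ⁻¹ := (Complex.inv_eq_conj hnorm).symm
  set Rf : IntermediateField ℚ ℂ := Subfield.toIntermediateField
      Complex.ofRealHom.fieldRange
      (fun x => ⟨(x : ℝ), rfl⟩) with hRf
  have hαR : ζ + ζ⁻¹ ∈ Rf := by
    have hfix : (starRingEnd ℂ) (ζ + ζ⁻¹) = ζ + ζ⁻¹ := by
      rw [map_add, hconj, map_inv₀, hconj, inv_inv, add_comm]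
    obtain ⟨r, hr⟩ := Complex.conj_eq_iff_real.mp hfix
    exact ⟨r, hr.symm⟩
  have hle : adjoin ℚ {ζ + ζ⁻¹} ≤ Rf := adjoin_le_iff.mpr (by simpa using hαR)
  intro hmem
  obtain ⟨r, hr⟩ := hle hmem
  have hr' : (r : ℂ) = ζ := hr
  have hc : (r : ℂ) ^ p = 1 := by rw [hr']; exact hζp
  have hrp : r ^ p = (1 : ℝ) ^ p := by rw [one_pow]; exact_mod_cast hc
  have hr1 : r = 1 := hodd.strictMono_pow.injective hrp
  exact hζ.ne_one hp.one_lt (by rw [← hr, hr1]; norm_num)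

lemma aux_F_deg (hp : p.Prime) (hodd : Odd p) (hζ : IsPrimitiveRoot ζ p) :
    relfinrank (adjoin ℚ {ζ + ζ⁻¹}) (adjoin ℚ {ζ}) = 2 := by
  have hζp : ζ ^ p = 1 := hζ.pow_eq_one
  set F₀ := adjoin ℚ {ζ + ζ⁻¹} with hF₀
  set K := adjoin ℚ {ζ} with hK
  have hζK : ζ ∈ K := mem_adjoin_simple_self ℚ ζ
  have hαK : ζ + ζ⁻¹ ∈ K := K.add_mem hζK (K.inv_mem hζK)
  have hFK : F₀ ≤ K := adjoin_le_iff.mpr (by simpa using hαK)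
  have hsup : F₀ ⊔ K = K := sup_eq_right.mpr hFK
  rw [← hsup, aux_rank_formula hp.ne_zero hζp]
  have h2 : (minpoly ↥F₀ ζ).natDegree ≤ 2 :=
    aux_deg_le_two hp.ne_zero hζp (mem_adjoin_simple_self ℚ _)
  have hnot : ζ ∉ (algebraMap ↥F₀ ℂ).range := by
    rintro ⟨y, hy⟩
    have hζF : ζ ∈ F₀ := by rw [← hy]; exact y.2
    exact aux_zeta_not_mem hp hodd hζ hζF
  have h2' : 2 ≤ (minpoly ↥F₀ ζ).natDegree :=
    (minpoly.two_le_natDegree_iff (aux_isIntegral hp.ne_zero hζp F₀)).mpr hnot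
  omega

end Aux2

/-- For an odd prime `p`, a characteristic-zero field `k` (realized as an
intermediate field of `ℚ ⊆ ℂ`) and a primitive `p`-th root of unity `ζ`,
one has `[k(ζ) : k] ≤ 2` iff `k` contains the unique subfield `F` of `ℚ(ζ)` with
`[ℚ(ζ) : F] = 2`. -/
theorem stmt2 (p : ℕ) (hp : p.Prime) (hodd : Odd p)
    (k : IntermediateField ℚ ℂ) (ζ : ℂ) (hζ : IsPrimitiveRoot ζ p) :
    relfinrank k (k ⊔ IntermediateField.adjoin ℚ {ζ}) ≤ 2 ↔
      ∃ F : IntermediateField ℚ ℂ,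
        F ≤ IntermediateField.adjoin ℚ {ζ} ∧
        relfinrank F (IntermediateField.adjoin ℚ {ζ}) = 2 ∧
        (∀ F' : IntermediateField ℚ ℂ, F' ≤ IntermediateField.adjoin ℚ {ζ} →
          relfinrank F' (IntermediateField.adjoin ℚ {ζ}) = 2 → F' = F) ∧
        F ≤ k := by
  have hζp : ζ ^ p = 1 := hζ.pow_eq_one
  set K := adjoin ℚ {ζ} with hK
  set F₀ := adjoin ℚ {ζ + ζ⁻¹} with hF₀
  have hζK : ζ ∈ K := mem_adjoin_simple_self ℚ ζ
  have hαK : ζ + ζ⁻¹ ∈ K := K.add_mem hζK (K.inv_mem hζK)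
  have hFK : F₀ ≤ K := adjoin_le_iff.mpr (by simpa using hαK)
  have hF2 : relfinrank F₀ K = 2 := aux_F_deg hp hodd hζ
  have huniq : ∀ F' : IntermediateField ℚ ℂ, F' ≤ K → relfinrank F' K = 2 → F' = F₀ := by
    intro F' hF'K hF'2
    have hsup' : F' ⊔ K = K := sup_eq_right.mpr hF'K
    have hdeg : (minpoly ↥F' ζ).natDegree = 2 := by
      rw [← aux_rank_formula hp.ne_zero hζp, hsup']
      exact hF'2
    have hα : ζ + ζ⁻¹ ∈ F' := aux_mem_of_deg_le_two hp hζ (le_of_eq hdeg)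
    have hFF' : F₀ ≤ F' := adjoin_le_iff.mpr (by simpa using hα)
    have hmul : relfinrank F₀ F' * relfinrank F' K = relfinrank F₀ K :=
      relfinrank_mul_relfinrank hFF' hF'K
    rw [hF'2, hF2] at hmul
    have h1 : relfinrank F₀ F' = 1 := by omega
    rw [relfinrank_eq_finrank_of_le hFF'] at h1
    have hbot : extendScalars hFF' = ⊥ := finrank_eq_one_iff.mp h1
    have hre : F' = restrictScalars ℚ (extendScalars hFF') :=
      (extendScalars_restrictScalars hFF').symm
    rw [hbot] at hre
    exact hre.trans (restrictScalars_bot_eq_self F₀)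
  constructor
  · intro h
    refine ⟨F₀, hFK, hF2, huniq, ?_⟩
    rw [aux_rank_formula hp.ne_zero hζp] at h
    exact adjoin_le_iff.mpr (by simpa using aux_mem_of_deg_le_two hp hζ h)
  · rintro ⟨F, hFle, hFdeg, hFuniq, hFk⟩
    have he : F₀ = F := hFuniq F₀ hFK hF2
    have hα : ζ + ζ⁻¹ ∈ k := hFk (by rw [← he]; exact mem_adjoin_simple_self ℚ _)
    rw [aux_rank_formula hp.ne_zero hζp]
    exact aux_deg_le_two hp.ne_zero hζp hα
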